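/- Let a > 0. Then the following holds if and only if a ≤ 1/2: for every z ∈ 𝔻 one has 1 + a·z ≠ 0 and Re((1 + 2a·z)/(1 + a·z)) > 0. (Equivalently, the function g(z) = z + a·z² is starlike with respect to the origin in 𝔻, i.e. φ(z) = 1 + z + a·z² is starlike with respect to φ(0) = 1.) -/

import Mathlib

open Complex Metric Set

theorem phi_starlike_iff (a : ℝ) (ha : 0 < a) :
    (∀ z ∈ ball (0:ℂ) 1,
        1 + (a : ℂ) * z ≠ 0 ∧
          0 < ((1 + 2 * (a : ℂ) * z) / (1 + (a : ℂ) * z)).re) ↔ a ≤ 1/2 := by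
  constructor
  · intro h
    by_contra hle
    push_neg at hle
    have h2a : (0:ℝ) < 2*a := by linarith
    set t : ℝ := (1/(2*a) + min 1 (1/a))/2 with ht
    have h1 : 1/(2*a) < 1 := by rw [div_lt_one h2a]; linarith
    have h2 : 1/(2*a) < 1/a := by
      rw [div_lt_div_iff₀ h2a ha]; nlinarith
    have h3 : 1/(2*a) < min 1 (1/a) := lt_min h1 h2
    have hm1 : min 1 (1/a) ≤ 1 := min_le_left _ _
    have hm2 : min 1 (1/a) ≤ 1/a := min_le_right _ _
    have ht1 : t < 1 := by rw [ht]; linarith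
    have ht2 : t < 1/a := by rw [ht]; linarith
    have ht3 : 1/(2*a) < t := by rw [ht]; linarith
    have ht0 : 0 < t := lt_trans (by positivity) ht3
    have hat : a*t < 1 := by
      have := (lt_div_iff₀ ha).mp ht2; linarith
    have hat2 : 1 < 2*a*t := by
      have := (div_lt_iff₀ h2a).mp ht3; linarith
    have hz : ((-t : ℝ) : ℂ) ∈ ball (0:ℂ) 1 := by
      simp only [mem_ball, dist_zero_right, Complex.norm_real, Real.norm_eq_abs, abs_neg,
        abs_of_pos ht0]
      exact ht1
    obtain ⟨hne, hpos⟩ := h _ hz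
    have heq : (1 + 2*(a:ℂ)*((-t : ℝ) : ℂ)) / (1 + (a:ℂ)*((-t : ℝ) : ℂ))
        = (((1 - 2*a*t)/(1 - a*t) : ℝ) : ℂ) := by
      push_cast; ring
    rw [heq, Complex.ofReal_re] at hpos
    have : (1-2*a*t)/(1-a*t) < 0 :=
      div_neg_of_neg_of_pos (by linarith) (by linarith)
    linarith
  · intro hle z hz
    set x := z.re with hx
    set y := z.im with hy
    have habs : ‖z‖ < 1 := by
      rwa [mem_ball, dist_zero_right] at hz
    have hs : x^2 + y^2 < 1 := by
      have := Complex.sq_norm z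
      rw [Complex.normSq_apply, ← hx, ← hy] at this
      nlinarith [norm_nonneg z]
    have hxl : |x| < 1 := lt_of_le_of_lt (Complex.abs_re_le_norm z) habs
    have hx1 : -1 < x := by cases abs_lt.mp hxl; linarith
    have hx2 : x < 1 := (abs_lt.mp hxl).2
    have hvre : (0:ℝ) < 1 + a*x := by nlinarith [abs_lt.mp hxl]
    have hne : 1 + (a : ℂ) * z ≠ 0 := by
      intro h0
      have : (1 + (a : ℂ) * z).re = 0 := by rw [h0]; simp
      simp [Complex.add_re, Complex.mul_re, ← hx, ← hy] at this
      linarith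
    refine ⟨hne, ?_⟩
    rw [Complex.div_re, ← add_div]
    apply div_pos
    · have e1 : (1 + 2 * (a:ℂ) * z).re = 1 + 2*a*x := by
        simp [Complex.add_re, Complex.mul_re, ← hx]
      have e2 : (1 + 2 * (a:ℂ) * z).im = 2*a*y := by
        simp [Complex.add_im, Complex.mul_im, ← hy]
      have e3 : (1 + (a:ℂ) * z).re = 1 + a*x := by
        simp [Complex.add_re, Complex.mul_re, ← hx]
      have e4 : (1 + (a:ℂ) * z).im = a*y := by
        simp [Complex.add_im, Complex.mul_im, ← hy]
      rw [e1, e2, e3, e4]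
      nlinarith [mul_nonneg (by linarith : (0:ℝ) ≤ 1-2*a) (by linarith : (0:ℝ) ≤ 1-a),
        mul_pos (mul_pos ha (by linarith : (0:ℝ) < x+1))
          (by nlinarith : (0:ℝ) < 3+2*a*(x-1)),
        sq_nonneg (a*y), sq_nonneg y]
    · exact Complex.normSq_pos.mpr hne
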